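/- arXiv:1506.00115 — 3 statements merged into one kernel-verified Lean document; each statement's English description precedes it below -/
import Mathlib

section
/- For any Banach spaces X and Y, any bounded linear operator T : X → Y, and any n ≥ 1, the n-th Bernstein number of T is bounded by 2√2 times the n-th (dyadic) entropy number of T: b_n(T) ≤ 2√2 · e_n(T). -/
noncomputable section

/-- The `n`-th Bernstein number of a bounded linear operator `T : X → Y`:
the supremum over `n`-dimensional subspaces `L` of `X` of the infimum over
nonzero `x ∈ L` of `‖T x‖ / ‖x‖`. -/
def bernsteinNumber {X Y : Type*} [NormedAddCommGroup X] [NormedSpace ℝ X]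
    [NormedAddCommGroup Y] [NormedSpace ℝ Y] (n : ℕ) (T : X →L[ℝ] Y) : ℝ :=
  ⨆ L : {L : Submodule ℝ X // Module.finrank ℝ L = n},
    ⨅ x : {x : L.1 // x ≠ 0}, ‖T (x.1 : X)‖ / ‖(x.1 : X)‖

/-- The `n`-th (dyadic) entropy number of `T : X → Y`: the infimum of all `ε > 0`
such that `T(B_X)` can be covered by `2^(n-1)` balls of radius `ε` in `Y`. -/
def entropyNumber {X Y : Type*} [NormedAddCommGroup X] [NormedSpace ℝ X]
    [NormedAddCommGroup Y] [NormedSpace ℝ Y] (n : ℕ) (T : X →L[ℝ] Y) : ℝ :=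
  sInf {ε : ℝ | 0 < ε ∧ ∃ s : Finset Y, s.card ≤ 2 ^ (n - 1) ∧
    ∀ x : X, ‖x‖ ≤ 1 → ∃ y ∈ s, ‖T x - y‖ ≤ ε}


open MeasureTheory Set
open scoped ENNReal NNReal Pointwise

set_option maxHeartbeats 1000000
set_option synthInstance.maxHeartbeats 400000

namespace BernsteinEntropyAux

lemma four_mul_le_sq (x y : ℝ≥0∞) : 4 * (x * y) ≤ (x + y) ^ 2 := by
  rcases eq_or_ne x ⊤ with rfl | hx
  · rcases eq_or_ne y 0 with rfl | hy
    · simp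
    · have h : (⊤ : ℝ≥0∞) + y = ⊤ := by simp
      rw [h]
      simp [pow_two, ENNReal.top_mul_top]
  · rcases eq_or_ne y ⊤ with rfl | hy
    · rcases eq_or_ne x 0 with rfl | hx0
      · simp
      · have h : x + (⊤ : ℝ≥0∞) = ⊤ := by simp
        rw [h]
        simp [pow_two, ENNReal.top_mul_top]
    · lift x to ℝ≥0 using hx
      lift y to ℝ≥0 using hy
      have h4 : (4 : ℝ≥0∞) = ((4 : ℝ≥0) : ℝ≥0∞) := by norm_num
      rw [h4, ← ENNReal.coe_mul, ← ENNReal.coe_mul, ← ENNReal.coe_add, ← ENNReal.coe_pow,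
        ENNReal.coe_le_coe, ← NNReal.coe_le_coe]
      push_cast
      nlinarith [sq_nonneg ((x : ℝ) - (y : ℝ))]

lemma volume_add_le_of_sub_subset {S T W : Set ℝ}
    (hSb : Bornology.IsBounded S) (hTb : Bornology.IsBounded T)
    (hSne : S.Nonempty) (hTne : T.Nonempty) (hW : MeasurableSet W) (hSub : S - T ⊆ W) :
    volume S + volume T ≤ volume W := by
  rcases eq_or_ne (volume W) ⊤ with hWtop | hWtop
  · rw [hWtop]; exact le_top
  set a := sSup S with ha
  set b := sSup T with hb
  set c := a - b with hc
  -- part 1 : volume S ≤ volume (W ∩ Iic c)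
  have hS_le : ∀ δ : ℝ, 0 < δ → volume S ≤ volume (W ∩ Iic (c + δ)) := by
    intro δ hδ
    obtain ⟨b', hb'T, hb'⟩ := exists_lt_of_lt_csSup hTne (by linarith : b - δ < sSup T)
    have hsub : (fun x => x + b') ⁻¹' S ⊆ W ∩ Iic (c + δ) := by
      intro x hx
      simp only [mem_preimage] at hx
      constructor
      · exact hSub ⟨x + b', hx, b', hb'T, by ring⟩
      · have hxa : x + b' ≤ a := le_csSup hSb.bddAbove hx
        simp only [mem_Iic]; linarith
    calc volume S = volume ((fun x => x + b') ⁻¹' S) :=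
          (measure_preimage_add_right volume b' S).symm
      _ ≤ volume (W ∩ Iic (c + δ)) := measure_mono hsub
  have hT_le : ∀ δ : ℝ, 0 < δ → volume T ≤ volume (W ∩ Ici (c - δ)) := by
    intro δ hδ
    obtain ⟨a', ha'S, ha'⟩ := exists_lt_of_lt_csSup hSne (by linarith : a - δ < sSup S)
    have hsub : (fun x => a' - x) ⁻¹' T ⊆ W ∩ Ici (c - δ) := by
      intro x hx
      simp only [mem_preimage] at hx
      constructor
      · exact hSub ⟨a', ha'S, a' - x, hx, by ring⟩
      · have hxb : a' - x ≤ b := le_csSup hTb.bddAbove hx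
        simp only [mem_Ici]; linarith
    have hvol : volume ((fun x => a' - x) ⁻¹' T) = volume T := by
      rw [show (fun x : ℝ => a' - x) = (fun x : ℝ => a' + x) ∘ (fun x : ℝ => -x) by
          ext x; simp [sub_eq_add_neg], preimage_comp,
        Measure.measure_preimage_neg, measure_preimage_add]
    calc volume T = volume ((fun x => a' - x) ⁻¹' T) := hvol.symm
      _ ≤ volume (W ∩ Ici (c - δ)) := measure_mono hsub
  -- limits
  have hWIic : volume S ≤ volume (W ∩ Iic c) := by
    have hiInter : ⋂ k : ℕ, (W ∩ Iic (c + 1 / (k + 1))) = W ∩ Iic c := by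
      ext x
      simp only [mem_iInter, mem_inter_iff, mem_Iic]
      constructor
      · intro h
        refine ⟨(h 0).1, ?_⟩
        by_contra hxc
        push_neg at hxc
        obtain ⟨k, hk⟩ := exists_nat_one_div_lt (by linarith : (0:ℝ) < x - c)
        have := (h k).2
        linarith
      · intro ⟨h1, h2⟩ k
        have : (0:ℝ) < 1 / (k + 1) := by positivity
        exact ⟨h1, by linarith⟩
    have htend := tendsto_measure_iInter_atTop
      (s := fun k : ℕ => W ∩ Iic (c + 1 / (k + 1)))
      (fun k => (hW.inter measurableSet_Iic).nullMeasurableSet)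
      (fun k l hkl => by
        apply inter_subset_inter_right
        apply Iic_subset_Iic.2
        have hk : (0:ℝ) < (k:ℝ) + 1 := by positivity
        have hl : (0:ℝ) < (l:ℝ) + 1 := by positivity
        have : (k:ℝ) + 1 ≤ (l:ℝ) + 1 := by
          have : (k:ℝ) ≤ (l:ℝ) := Nat.cast_le.2 hkl
          linarith
        have := one_div_le_one_div_of_le hk this
        linarith)
      ⟨0, ne_top_of_le_ne_top hWtop (measure_mono inter_subset_left)⟩
    rw [hiInter] at htend
    exact ge_of_tendsto htend (Filter.Eventually.of_forall fun k =>
      hS_le (1 / (k + 1)) (by positivity))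
  have hWIci : volume T ≤ volume (W ∩ Ici c) := by
    have hiInter : ⋂ k : ℕ, (W ∩ Ici (c - 1 / (k + 1))) = W ∩ Ici c := by
      ext x
      simp only [mem_iInter, mem_inter_iff, mem_Ici]
      constructor
      · intro h
        refine ⟨(h 0).1, ?_⟩
        by_contra hxc
        push_neg at hxc
        obtain ⟨k, hk⟩ := exists_nat_one_div_lt (by linarith : (0:ℝ) < c - x)
        have := (h k).2
        linarith
      · intro ⟨h1, h2⟩ k
        have : (0:ℝ) < 1 / (k + 1) := by positivity
        exact ⟨h1, by linarith⟩
    have htend := tendsto_measure_iInter_atTop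
      (s := fun k : ℕ => W ∩ Ici (c - 1 / (k + 1)))
      (fun k => (hW.inter measurableSet_Ici).nullMeasurableSet)
      (fun k l hkl => by
        apply inter_subset_inter_right
        apply Ici_subset_Ici.2
        have hk : (0:ℝ) < (k:ℝ) + 1 := by positivity
        have hl : (0:ℝ) < (l:ℝ) + 1 := by positivity
        have : (k:ℝ) + 1 ≤ (l:ℝ) + 1 := by
          have : (k:ℝ) ≤ (l:ℝ) := Nat.cast_le.2 hkl
          linarith
        have := one_div_le_one_div_of_le hk this
        linarith)
      ⟨0, ne_top_of_le_ne_top hWtop (measure_mono inter_subset_left)⟩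
    rw [hiInter] at htend
    exact ge_of_tendsto htend (Filter.Eventually.of_forall fun k =>
      hT_le (1 / (k + 1)) (by positivity))
  have hIoi : volume T ≤ volume (W ∩ Ioi c) := by
    have h1 : W ∩ Ici c ⊆ (W ∩ Ioi c) ∪ {c} := by
      intro x ⟨hxW, hxc⟩
      rcases eq_or_lt_of_le (mem_Ici.1 hxc) with h | h
      · exact Or.inr (by simp [h.symm])
      · exact Or.inl ⟨hxW, h⟩
    calc volume T ≤ volume (W ∩ Ici c) := hWIci
      _ ≤ volume ((W ∩ Ioi c) ∪ {c}) := measure_mono h1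
      _ ≤ volume (W ∩ Ioi c) + volume ({c} : Set ℝ) := measure_union_le _ _
      _ = volume (W ∩ Ioi c) := by simp
  calc volume S + volume T ≤ volume (W ∩ Iic c) + volume (W ∩ Ioi c) :=
        add_le_add hWIic hIoi
    _ = volume (W ∩ Iic c) + volume (W \ Iic c) := by
        congr 1
        congr 1
        rw [diff_eq, compl_Iic]
    _ = volume W := measure_inter_add_diff W measurableSet_Iic

section Slice

variable {α : Type*} [MeasurableSpace α] (μ : Measure α) [SigmaFinite μ]

lemma slice_set_eq {F : α → ℝ≥0∞} (hF : Measurable F) (M : ℝ≥0∞) :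
    ∫⁻ l in Ioo (0:ℝ) 1, μ {t | ENNReal.ofReal l * M ≤ F t} =
      ∫⁻ t, (volume.restrict (Ioo (0:ℝ) 1)) {l | ENNReal.ofReal l * M ≤ F t} ∂μ := by
  have hG : MeasurableSet {p : ℝ × α | ENNReal.ofReal p.1 * M ≤ F p.2} := by
    apply measurableSet_le
    · exact (ENNReal.measurable_ofReal.comp measurable_fst).mul measurable_const
    · exact hF.comp measurable_snd
  have h1 := Measure.prod_apply (μ := volume.restrict (Ioo (0:ℝ) 1)) (ν := μ) hG
  have h2 := Measure.prod_apply_symm (μ := volume.restrict (Ioo (0:ℝ) 1)) (ν := μ) hG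
  rw [h1] at h2
  exact h2

lemma lintegral_slice_ge {F : α → ℝ≥0∞} (hF : Measurable F) {M : ℝ≥0∞}
    (hM0 : M ≠ 0) (hMtop : M ≠ ⊤) (hFM : ∀ t, F t ≤ M) :
    (∫⁻ t, F t ∂μ) / M ≤ ∫⁻ l in Ioo (0:ℝ) 1, μ {t | ENNReal.ofReal l * M ≤ F t} := by
  rw [slice_set_eq μ hF M]
  have key : ∀ t, F t / M ≤ (volume.restrict (Ioo (0:ℝ) 1)) {l | ENNReal.ofReal l * M ≤ F t} := by
    intro t
    set r := (F t / M).toReal with hr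
    have hdivtop : F t / M ≠ ⊤ :=
      (ENNReal.div_lt_top (lt_of_le_of_lt (hFM t) hMtop.lt_top).ne hM0).ne
    have hdivle : F t / M ≤ 1 := ENNReal.div_le_of_le_mul (by simpa using hFM t)
    have hrle : r ≤ 1 := by
      rw [hr]
      calc (F t / M).toReal ≤ (1 : ℝ≥0∞).toReal := ENNReal.toReal_mono ENNReal.one_ne_top hdivle
        _ = 1 := by simp
    have hsub : Ioo (0:ℝ) r ⊆ Ioo (0:ℝ) 1 ∩ {l | ENNReal.ofReal l * M ≤ F t} := by
      intro l ⟨hl0, hlr⟩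
      refine ⟨⟨hl0, lt_of_lt_of_le hlr hrle⟩, ?_⟩
      have h1 : ENNReal.ofReal l ≤ F t / M := by
        calc ENNReal.ofReal l ≤ ENNReal.ofReal r := ENNReal.ofReal_le_ofReal hlr.le
          _ = F t / M := ENNReal.ofReal_toReal hdivtop
      calc ENNReal.ofReal l * M ≤ (F t / M) * M := mul_le_mul_left h1 M
        _ = F t := ENNReal.div_mul_cancel hM0 hMtop
    calc F t / M = volume (Ioo (0:ℝ) r) := by
          rw [Real.volume_Ioo, sub_zero, hr, ENNReal.ofReal_toReal hdivtop]
      _ ≤ (volume.restrict (Ioo (0:ℝ) 1)) {l | ENNReal.ofReal l * M ≤ F t} := by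
          rw [Measure.restrict_apply' measurableSet_Ioo]
          exact measure_mono (fun l hl => ⟨(hsub hl).2, (hsub hl).1⟩)
  calc (∫⁻ t, F t ∂μ) / M = ∫⁻ t, F t / M ∂μ := by
        simp only [div_eq_mul_inv]
        rw [lintegral_mul_const' M⁻¹ F (by simp [hM0])]
    _ ≤ _ := lintegral_mono key

lemma lintegral_slice_le {F : α → ℝ≥0∞} (hF : Measurable F) {M : ℝ≥0∞}
    (hM0 : M ≠ 0) (hMtop : M ≠ ⊤) (hFtop : ∀ t, F t ≠ ⊤) :
    ∫⁻ l in Ioo (0:ℝ) 1, μ {t | ENNReal.ofReal l * M ≤ F t} ≤ (∫⁻ t, F t ∂μ) / M := by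
  rw [slice_set_eq μ hF M]
  have key : ∀ t, (volume.restrict (Ioo (0:ℝ) 1)) {l | ENNReal.ofReal l * M ≤ F t} ≤ F t / M := by
    intro t
    set r := (F t / M).toReal with hr
    have hdivtop : F t / M ≠ ⊤ := (ENNReal.div_lt_top (hFtop t) hM0).ne
    have hsub : Ioo (0:ℝ) 1 ∩ {l | ENNReal.ofReal l * M ≤ F t} ⊆ Ioc (0:ℝ) r := by
      intro l ⟨⟨hl0, _⟩, hl⟩
      refine ⟨hl0, ?_⟩
      have h1 : ENNReal.ofReal l ≤ F t / M := by
        rw [ENNReal.le_div_iff_mul_le (Or.inl hM0) (Or.inl hMtop)]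
        exact hl
      exact (ENNReal.ofReal_le_iff_le_toReal hdivtop).1 h1
    calc (volume.restrict (Ioo (0:ℝ) 1)) {l | ENNReal.ofReal l * M ≤ F t}
        = volume (Ioo (0:ℝ) 1 ∩ {l | ENNReal.ofReal l * M ≤ F t}) := by
          rw [Measure.restrict_apply' measurableSet_Ioo]
          rw [inter_comm]
      _ ≤ volume (Ioc (0:ℝ) r) := measure_mono hsub
      _ = F t / M := by rw [Real.volume_Ioc, sub_zero, hr, ENNReal.ofReal_toReal hdivtop]
  calc ∫⁻ t, (volume.restrict (Ioo (0:ℝ) 1)) {l | ENNReal.ofReal l * M ≤ F t} ∂μ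
      ≤ ∫⁻ t, F t / M ∂μ := lintegral_mono key
    _ = (∫⁻ t, F t ∂μ) / M := by
        simp only [div_eq_mul_inv]
        rw [lintegral_mul_const' M⁻¹ F (by simp [hM0])]

lemma measurable_slice {F : α → ℝ≥0∞} (hF : Measurable F) (M : ℝ≥0∞) :
    Measurable fun l : ℝ => μ {t | ENNReal.ofReal l * M ≤ F t} := by
  have hG : MeasurableSet {p : ℝ × α | ENNReal.ofReal p.1 * M ≤ F p.2} := by
    apply measurableSet_le
    · exact (ENNReal.measurable_ofReal.comp measurable_fst).mul measurable_const
    · exact hF.comp measurable_snd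
  exact measurable_measure_prodMk_left hG

lemma prod_step {n : ℕ}
    (IH : ∀ A B : Set (Fin n → ℝ), IsCompact A → IsCompact B → A.Nonempty → B.Nonempty →
      4 ^ n * (volume A * volume B) ≤ volume (A - B) ^ 2)
    (A B : Set (ℝ × (Fin n → ℝ))) (hA : IsCompact A) (hB : IsCompact B)
    (hAne : A.Nonempty) (hBne : B.Nonempty) :
    4 ^ (n+1) * (volume A * volume B) ≤ volume (A - B) ^ 2 := by
  classical
  rcases eq_or_ne (volume A) 0 with hA0 | hA0
  · rw [hA0]; simp
  rcases eq_or_ne (volume B) 0 with hB0 | hB0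
  · rw [hB0]; simp
  have hvolprod : (volume : Measure (ℝ × (Fin n → ℝ))) = (volume : Measure ℝ).prod volume :=
    Measure.volume_eq_prod ℝ (Fin n → ℝ)
  set C := A - B with hCdef
  have hC : IsCompact C := by
    rw [hCdef, ← image2_sub, ← Set.image_prod]
    exact (hA.prod hB).image (continuous_fst.sub continuous_snd)
  set f := fun t : ℝ => (volume : Measure (Fin n → ℝ)) (Prod.mk t ⁻¹' A) with hfdef
  set g := fun t : ℝ => (volume : Measure (Fin n → ℝ)) (Prod.mk t ⁻¹' B) with hgdef
  set h := fun s : ℝ => (volume : Measure (Fin n → ℝ)) (Prod.mk s ⁻¹' C) with hhdef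
  have hfm : Measurable f := measurable_measure_prodMk_left hA.measurableSet
  have hgm : Measurable g := measurable_measure_prodMk_left hB.measurableSet
  have hhm : Measurable h := measurable_measure_prodMk_left hC.measurableSet
  have hfA : volume A = ∫⁻ t, f t := by
    rw [hvolprod, Measure.prod_apply hA.measurableSet]
  have hgB : volume B = ∫⁻ t, g t := by
    rw [hvolprod, Measure.prod_apply hB.measurableSet]
  have hhC : volume C = ∫⁻ s, h s := by
    rw [hvolprod, Measure.prod_apply hC.measurableSet]
  -- sup bounds
  set Mf := ⨆ t, f t with hMfdef
  set Mg := ⨆ t, g t with hMgdef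
  have hslice_subA : ∀ t : ℝ, Prod.mk t ⁻¹' A ⊆ Prod.snd '' A :=
    fun t w hw => ⟨(t, w), hw, rfl⟩
  have hslice_subB : ∀ t : ℝ, Prod.mk t ⁻¹' B ⊆ Prod.snd '' B :=
    fun t w hw => ⟨(t, w), hw, rfl⟩
  have hslice_subC : ∀ s : ℝ, Prod.mk s ⁻¹' C ⊆ Prod.snd '' C :=
    fun s w hw => ⟨(s, w), hw, rfl⟩
  have hMft : Mf ≠ ⊤ :=
    (lt_of_le_of_lt (iSup_le fun t => measure_mono (hslice_subA t))
      (hA.image continuous_snd).measure_lt_top).ne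
  have hMgt : Mg ≠ ⊤ :=
    (lt_of_le_of_lt (iSup_le fun t => measure_mono (hslice_subB t))
      (hB.image continuous_snd).measure_lt_top).ne
  have hMf0 : Mf ≠ 0 := by
    intro h0
    apply hA0
    rw [hfA]
    have hz : ∀ t, f t = 0 := fun t => le_antisymm (le_trans (le_iSup f t) h0.le) zero_le
    simp [hz]
  have hMg0 : Mg ≠ 0 := by
    intro h0
    apply hB0
    rw [hgB]
    have hz : ∀ t, g t = 0 := fun t => le_antisymm (le_trans (le_iSup g t) h0.le) zero_le
    simp [hz]
  have hfM : ∀ t, f t ≤ Mf := fun t => le_iSup f t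
  have hgM : ∀ t, g t ≤ Mg := fun t => le_iSup g t
  -- sigma and c
  set σ := (Mf * Mg) ^ ((2:ℝ)⁻¹) with hσdef
  have hσsq : σ ^ (2:ℕ) = Mf * Mg := by
    rw [hσdef, ← ENNReal.rpow_natCast _ 2, ← ENNReal.rpow_mul]
    norm_num
  have hMfMg0 : Mf * Mg ≠ 0 := mul_ne_zero hMf0 hMg0
  have hMfMgt : Mf * Mg ≠ ⊤ := ENNReal.mul_ne_top hMft hMgt
  have hσ0 : σ ≠ 0 := (ENNReal.rpow_pos (pos_iff_ne_zero.2 hMfMg0) hMfMgt).ne'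
  have hσt : σ ≠ ⊤ := ENNReal.rpow_ne_top_of_nonneg (by norm_num) hMfMgt
  set c := (2:ℝ≥0∞) ^ n * σ with hcdef
  have hc0 : c ≠ 0 := mul_ne_zero (by positivity) hσ0
  have hct : c ≠ ⊤ := ENNReal.mul_ne_top (by simp) hσt
  have h4 : ((2:ℝ≥0∞) ^ n) ^ (2:ℕ) = 4 ^ n := by
    rw [← pow_mul, mul_comm, pow_mul]
    norm_num
  -- key pointwise inequality
  have hkey : ∀ l ∈ Ioo (0:ℝ) 1,
      volume {t | ENNReal.ofReal l * Mf ≤ f t} + volume {t | ENNReal.ofReal l * Mg ≤ g t} ≤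
        volume {s | ENNReal.ofReal l * c ≤ h s} := by
    rintro l ⟨hl0, hl1⟩
    have hofl0 : ENNReal.ofReal l ≠ 0 := (ENNReal.ofReal_pos.2 hl0).ne'
    have hposf : ∀ t ∈ {t | ENNReal.ofReal l * Mf ≤ f t}, f t ≠ 0 := by
      intro t ht
      exact (lt_of_lt_of_le (pos_iff_ne_zero.2 (mul_ne_zero hofl0 hMf0)) ht).ne'
    have hposg : ∀ t ∈ {t | ENNReal.ofReal l * Mg ≤ g t}, g t ≠ 0 := by
      intro t ht
      exact (lt_of_lt_of_le (pos_iff_ne_zero.2 (mul_ne_zero hofl0 hMg0)) ht).ne'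
    apply volume_add_le_of_sub_subset
    · exact ((hA.image continuous_fst).isBounded).subset (by
        intro t ht
        obtain ⟨w, hw⟩ := nonempty_of_measure_ne_zero (hposf t ht)
        exact ⟨(t, w), hw, rfl⟩)
    · exact ((hB.image continuous_fst).isBounded).subset (by
        intro t ht
        obtain ⟨w, hw⟩ := nonempty_of_measure_ne_zero (hposg t ht)
        exact ⟨(t, w), hw, rfl⟩)
    · have : ENNReal.ofReal l * Mf < Mf := by
        have h1 : ENNReal.ofReal l < 1 := ENNReal.ofReal_lt_one.2 hl1
        calc ENNReal.ofReal l * Mf < 1 * Mf := by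
              exact ENNReal.mul_lt_mul_left hMf0 hMft h1
          _ = Mf := one_mul Mf
      obtain ⟨t, ht⟩ := lt_iSup_iff.1 this
      exact ⟨t, ht.le⟩
    · have : ENNReal.ofReal l * Mg < Mg := by
        have h1 : ENNReal.ofReal l < 1 := ENNReal.ofReal_lt_one.2 hl1
        calc ENNReal.ofReal l * Mg < 1 * Mg := by
              exact ENNReal.mul_lt_mul_left hMg0 hMgt h1
          _ = Mg := one_mul Mg
      obtain ⟨t, ht⟩ := lt_iSup_iff.1 this
      exact ⟨t, ht.le⟩
    · exact measurableSet_le measurable_const hhm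
    · rintro s ⟨t1, ht1, t2, ht2, heq⟩
      simp only [mem_setOf_eq] at ht1 ht2 ⊢
      set A1 := Prod.mk t1 ⁻¹' A with hA1def
      set B2 := Prod.mk t2 ⁻¹' B with hB2def
      have hA1ne : A1.Nonempty := nonempty_of_measure_ne_zero (hposf t1 ht1)
      have hB2ne : B2.Nonempty := nonempty_of_measure_ne_zero (hposg t2 ht2)
      have hA1c : IsCompact A1 :=
        IsCompact.of_isClosed_subset (hA.image continuous_snd)
          (hA.isClosed.preimage (Continuous.prodMk_right t1)) (hslice_subA t1)
      have hB2c : IsCompact B2 :=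
        IsCompact.of_isClosed_subset (hB.image continuous_snd)
          (hB.isClosed.preimage (Continuous.prodMk_right t2)) (hslice_subB t2)
      have hIH := IH A1 B2 hA1c hB2c hA1ne hB2ne
      have hsub : A1 - B2 ⊆ Prod.mk s ⁻¹' C := by
        rintro x ⟨w1, hw1, w2, hw2, hx⟩
        refine ⟨(t1, w1), hw1, (t2, w2), hw2, ?_⟩
        show ((t1, w1) : ℝ × (Fin n → ℝ)) - (t2, w2) = (s, x)
        rw [Prod.mk_sub_mk]
        simp only [Prod.mk.injEq]
        exact ⟨heq, hx⟩
      have hmono : (volume : Measure (Fin n → ℝ)) (A1 - B2) ≤ h s := measure_mono hsub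
      have hle : (ENNReal.ofReal l * c) ^ (2:ℕ) ≤ (h s) ^ (2:ℕ) := by
        have e1 : (ENNReal.ofReal l * c) ^ (2:ℕ) =
            4 ^ n * ((ENNReal.ofReal l * Mf) * (ENNReal.ofReal l * Mg)) := by
          rw [hcdef, mul_pow, mul_pow, h4, hσsq]
          ring
        rw [e1]
        calc 4 ^ n * ((ENNReal.ofReal l * Mf) * (ENNReal.ofReal l * Mg)) ≤
              4 ^ n * (f t1 * g t2) := by
              exact mul_le_mul_right (mul_le_mul' ht1 ht2) _
          _ ≤ (volume : Measure (Fin n → ℝ)) (A1 - B2) ^ (2:ℕ) := hIH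
          _ ≤ (h s) ^ (2:ℕ) := pow_le_pow_left' hmono 2
      by_contra hcon
      push_neg at hcon
      exact absurd hle (not_le.2 (ENNReal.pow_lt_pow_left two_ne_zero hcon))
  -- integrate
  have hWmeas1 : Measurable fun l : ℝ => volume {t | ENNReal.ofReal l * Mf ≤ f t} :=
    measurable_slice volume hfm Mf
  have hWmeas2 : Measurable fun l : ℝ => volume {t | ENNReal.ofReal l * Mg ≤ g t} :=
    measurable_slice volume hgm Mg
  have hWmeas3 : Measurable fun l : ℝ => volume {s | ENNReal.ofReal l * c ≤ h s} :=
    measurable_slice volume hhm c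
  have hsum : volume A / Mf + volume B / Mg ≤ volume C / c := by
    rw [hfA, hgB, hhC]
    calc (∫⁻ t, f t) / Mf + (∫⁻ t, g t) / Mg ≤
        (∫⁻ l in Ioo (0:ℝ) 1, volume {t | ENNReal.ofReal l * Mf ≤ f t}) +
        (∫⁻ l in Ioo (0:ℝ) 1, volume {t | ENNReal.ofReal l * Mg ≤ g t}) :=
          add_le_add (lintegral_slice_ge volume hfm hMf0 hMft hfM)
            (lintegral_slice_ge volume hgm hMg0 hMgt hgM)
      _ = ∫⁻ l in Ioo (0:ℝ) 1, (volume {t | ENNReal.ofReal l * Mf ≤ f t} +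
            volume {t | ENNReal.ofReal l * Mg ≤ g t}) :=
          (lintegral_add_left hWmeas1 _).symm
      _ ≤ ∫⁻ l in Ioo (0:ℝ) 1, volume {s | ENNReal.ofReal l * c ≤ h s} :=
          setLIntegral_mono hWmeas3 hkey
      _ ≤ (∫⁻ s, h s) / c := by
          apply lintegral_slice_le volume hhm hc0 hct
          intro s
          exact (lt_of_le_of_lt (measure_mono (hslice_subC s))
            (hC.image continuous_snd).measure_lt_top).ne
  -- final arithmetic
  have hX : (volume A / Mf + volume B / Mg) * c ≤ volume C := by
    rw [← ENNReal.le_div_iff_mul_le (Or.inl hc0) (Or.inl hct)]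
    exact hsum
  have hc2 : c ^ (2:ℕ) = 4 ^ n * (Mf * Mg) := by
    rw [hcdef, mul_pow, h4, hσsq]
  have hAdiv : volume A / Mf * Mf = volume A := ENNReal.div_mul_cancel hMf0 hMft
  have hBdiv : volume B / Mg * Mg = volume B := ENNReal.div_mul_cancel hMg0 hMgt
  calc 4 ^ (n+1) * (volume A * volume B)
      = 4 ^ (n+1) * ((volume A / Mf * Mf) * (volume B / Mg * Mg)) := by
        rw [hAdiv, hBdiv]
    _ = 4 * (volume A / Mf * (volume B / Mg)) * c ^ (2:ℕ) := by
        rw [hc2]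
        ring
    _ ≤ (volume A / Mf + volume B / Mg) ^ (2:ℕ) * c ^ (2:ℕ) :=
        mul_le_mul_left (four_mul_le_sq _ _) _
    _ = ((volume A / Mf + volume B / Mg) * c) ^ (2:ℕ) := (mul_pow _ _ _).symm
    _ ≤ volume C ^ (2:ℕ) := pow_le_pow_left' hX 2

end Slice

lemma rs_lower : ∀ n : ℕ, ∀ A B : Set (Fin n → ℝ), IsCompact A → IsCompact B →
    A.Nonempty → B.Nonempty →
    4 ^ n * (volume A * volume B) ≤ volume (A - B) ^ 2 := by
  intro n
  induction n with
  | zero =>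
    intro A B hA hB hAne hBne
    have hvol : volume (univ : Set (Fin 0 → ℝ)) = 1 := by
      rw [volume_pi, Measure.pi_of_empty]
      simp
    have huniv : ∀ (s : Set (Fin 0 → ℝ)), s.Nonempty → s = univ := by
      intro s ⟨x, hx⟩
      apply eq_univ_of_forall
      intro y
      rwa [Subsingleton.elim y x]
    have hne : ((univ : Set (Fin 0 → ℝ)) - univ).Nonempty :=
      ⟨default - default, default, mem_univ _, default, mem_univ _, rfl⟩
    rw [huniv A hAne, huniv B hBne, huniv _ hne, hvol]
    norm_num
  | succ n IH =>
    intro A B hA hB hAne hBne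
    set e : (Fin (n+1) → ℝ) →ₗ[ℝ] ℝ × (Fin n → ℝ) :=
      (LinearMap.proj 0).prod (LinearMap.funLeft ℝ ℝ Fin.succ) with hedef
    have he_eq : ⇑e = ⇑(MeasurableEquiv.piFinSuccAbove (fun _ : Fin (n+1) => ℝ) 0) := by
      funext x
      rfl
    have hmp : MeasurePreserving (⇑e) volume volume := by
      rw [he_eq]
      exact volume_preserving_piFinSuccAbove (fun _ : Fin (n+1) => ℝ) 0
    have hcont : Continuous (⇑e) := e.continuous_of_finiteDimensional
    have himage : ∀ s : Set (Fin (n+1) → ℝ), MeasurableSet s → volume (⇑e '' s) = volume s := by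
      intro s hs
      rw [he_eq, MeasurableEquiv.image_eq_preimage_symm]
      exact ((volume_preserving_piFinSuccAbove (fun _ : Fin (n+1) => ℝ) 0).symm
        (MeasurableEquiv.piFinSuccAbove (fun _ : Fin (n+1) => ℝ) 0)).measure_preimage
        hs.nullMeasurableSet
    have hsub_image : ⇑e '' (A - B) = (⇑e '' A) - (⇑e '' B) := by
      rw [← image2_sub, ← image2_sub]
      exact image_image2_distrib (fun a b => map_sub e a b)
    have h1 := prod_step IH (⇑e '' A) (⇑e '' B) (hA.image hcont) (hB.image hcont)
      (hAne.image _) (hBne.image _)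
    rw [← hsub_image] at h1
    rw [himage A hA.measurableSet, himage B hB.measurableSet] at h1
    have hABm : MeasurableSet (A - B) := by
      have : IsCompact (A - B) := by
        rw [← image2_sub, ← Set.image_prod]
        exact (hA.prod hB).image (continuous_fst.sub continuous_snd)
      exact this.measurableSet
    rwa [himage (A - B) hABm] at h1

variable {X Y : Type*} [NormedAddCommGroup X] [NormedSpace ℝ X]
    [NormedAddCommGroup Y] [NormedSpace ℝ Y]

lemma core (T : X →L[ℝ] Y) (n : ℕ) (hn : 1 ≤ n)
    (L : Submodule ℝ X) (hL : Module.finrank ℝ L = n)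
    {ε : ℝ} (hε : 0 < ε) (s : Finset Y) (hcard : s.card ≤ 2 ^ (n - 1))
    (hcov : ∀ x : X, ‖x‖ ≤ 1 → ∃ y ∈ s, ‖T x - y‖ ≤ ε) :
    (⨅ x : {x : L // x ≠ 0}, ‖T (x.1 : X)‖ / ‖(x.1 : X)‖) ≤ 2 * ε := by
  set b := ⨅ x : {x : L // x ≠ 0}, ‖T (x.1 : X)‖ / ‖(x.1 : X)‖ with hbdef
  rcases le_or_gt b 0 with hb0 | hb0
  · linarith
  have hbdd : BddBelow (range fun x : {x : L // x ≠ 0} => ‖T (x.1 : X)‖ / ‖(x.1 : X)‖) := by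
    refine ⟨0, ?_⟩
    rintro r ⟨x, rfl⟩
    positivity
  have hble : ∀ u : L, b * ‖u‖ ≤ ‖T (u : X)‖ := by
    intro u
    by_cases hu : u = 0
    · simp [hu]
    · have h1 : b ≤ ‖T (u : X)‖ / ‖(u : X)‖ := ciInf_le hbdd ⟨u, hu⟩
      have h2 : (0:ℝ) < ‖(u : X)‖ := by
        simp only [norm_pos_iff]
        intro h
        exact hu (Subtype.coe_injective (by simpa using h))
      calc b * ‖u‖ = b * ‖(u : X)‖ := rfl
        _ ≤ ‖T (u : X)‖ / ‖(u : X)‖ * ‖(u : X)‖ :=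
            mul_le_mul_of_nonneg_right h1 (norm_nonneg _)
        _ = ‖T (u : X)‖ := div_mul_cancel₀ _ h2.ne'
  have hfd : FiniteDimensional ℝ L := FiniteDimensional.of_finrank_pos (by omega)
  set φ : (Fin n → ℝ) ≃ₗ[ℝ] L :=
    (((Module.finBasis ℝ L).reindex (finCongr hL)).equivFun).symm with hφdef
  set ψ : (Fin n → ℝ) →ₗ[ℝ] Y :=
    (T : X →ₗ[ℝ] Y).comp (L.subtype.comp (φ : (Fin n → ℝ) →ₗ[ℝ] L)) with hψdef
  have hψ : ∀ w, ψ w = T ((φ w : L) : X) := fun w => rfl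
  have hψcont : Continuous ψ := ψ.continuous_of_finiteDimensional
  set Ψ := LinearMap.toContinuousLinearMap ψ with hΨdef
  have hΨle : ∀ w, ‖ψ w‖ ≤ ‖Ψ‖ * ‖w‖ := fun w => Ψ.le_opNorm w
  set φc : (Fin n → ℝ) ≃L[ℝ] L := φ.toContinuousLinearEquiv with hφcdef
  set K : ℝ := ‖(φc.symm : ↥L →L[ℝ] (Fin n → ℝ))‖ with hKdef
  have hKnn : (0:ℝ) ≤ K := by
    rw [hKdef]
    exact norm_nonneg ((φc.symm : ↥L →L[ℝ] (Fin n → ℝ)))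
  have hK : ∀ w : Fin n → ℝ, ‖w‖ ≤ K * ‖φ w‖ := by
    intro w
    have h1 := φc.antilipschitz.le_mul_dist w 0
    simp [dist_eq_norm] at h1
    exact h1
  have hψlow : ∀ w : Fin n → ℝ, b * ‖φ w‖ ≤ ‖ψ w‖ := by
    intro w
    rw [hψ w]
    exact hble (φ w)
  have hwlow : ∀ w : Fin n → ℝ, ‖w‖ ≤ (K / b) * ‖ψ w‖ := by
    intro w
    have h2 : ‖φ w‖ ≤ ‖ψ w‖ / b := by
      rw [le_div_iff₀ hb0]
      calc ‖φ w‖ * b = b * ‖φ w‖ := mul_comm _ _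
        _ ≤ ‖ψ w‖ := hψlow w
    calc ‖w‖ ≤ K * ‖φ w‖ := hK w
      _ ≤ K * (‖ψ w‖ / b) := mul_le_mul_of_nonneg_left h2 hKnn
      _ = (K / b) * ‖ψ w‖ := by ring
  -- the sets
  set U : Set (Fin n → ℝ) := {w | ‖ψ w‖ ≤ 1} with hUdef
  have hUsmul : ∀ r : ℝ, 0 < r → r • U = {w | ‖ψ w‖ ≤ r} := by
    intro r hr
    ext w
    constructor
    · rintro ⟨u, hu, rfl⟩
      show ‖ψ (r • u)‖ ≤ r
      rw [ψ.map_smul, norm_smul, Real.norm_eq_abs, abs_of_pos hr]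
      calc r * ‖ψ u‖ ≤ r * 1 := mul_le_mul_of_nonneg_left hu hr.le
        _ = r := mul_one r
    · intro hw
      refine ⟨r⁻¹ • w, ?_, ?_⟩
      · show ‖ψ (r⁻¹ • w)‖ ≤ 1
        rw [ψ.map_smul, norm_smul, Real.norm_eq_abs, abs_of_pos (inv_pos.2 hr)]
        rw [inv_mul_le_iff₀ hr, mul_one]
        exact hw
      · exact smul_inv_smul₀ hr.ne' w
  have hUclosed : IsClosed U := isClosed_le hψcont.norm continuous_const
  have hUbdd : Bornology.IsBounded U := by
    apply (Metric.isBounded_closedBall (x := (0 : Fin n → ℝ)) (r := K / b)).subset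
    intro w hw
    simp only [Metric.mem_closedBall, dist_zero_right]
    calc ‖w‖ ≤ (K / b) * ‖ψ w‖ := hwlow w
      _ ≤ (K / b) * 1 := mul_le_mul_of_nonneg_left hw (by positivity)
      _ = K / b := mul_one _
  have hUvol_top : volume U ≠ ⊤ := hUbdd.measure_lt_top.ne
  have hUvol_pos : volume U ≠ 0 := by
    have hball : Metric.closedBall (0 : Fin n → ℝ) (1 / (‖Ψ‖ + 1)) ⊆ U := by
      intro w hw
      simp only [Metric.mem_closedBall, dist_zero_right] at hw
      have h1 : ‖ψ w‖ ≤ ‖Ψ‖ * (1 / (‖Ψ‖ + 1)) := by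
        calc ‖ψ w‖ ≤ ‖Ψ‖ * ‖w‖ := hΨle w
          _ ≤ ‖Ψ‖ * (1 / (‖Ψ‖ + 1)) := mul_le_mul_of_nonneg_left hw (norm_nonneg _)
      have h2 : ‖Ψ‖ * (1 / (‖Ψ‖ + 1)) ≤ 1 := by
        rw [mul_one_div, div_le_one (by positivity)]
        linarith
      exact le_trans h1 h2
    have := Metric.measure_closedBall_pos (volume : Measure (Fin n → ℝ))
      (0 : Fin n → ℝ) (by positivity : (0:ℝ) < 1 / (‖Ψ‖ + 1))
    exact (lt_of_lt_of_le this (measure_mono hball)).ne'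
  -- covering sets
  set Kset : Y → Set (Fin n → ℝ) := fun y => {w | ‖ψ w‖ ≤ b ∧ ‖ψ w - y‖ ≤ ε} with hKsetdef
  have hKsub : ∀ y, Kset y ⊆ {w | ‖ψ w‖ ≤ b} := fun y w hw => hw.1
  have hSSbdd : Bornology.IsBounded {w : Fin n → ℝ | ‖ψ w‖ ≤ b} := by
    apply (Metric.isBounded_closedBall (x := (0 : Fin n → ℝ)) (r := (K / b) * b)).subset
    intro w hw
    simp only [Metric.mem_closedBall, dist_zero_right]
    calc ‖w‖ ≤ (K / b) * ‖ψ w‖ := hwlow w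
      _ ≤ (K / b) * b := mul_le_mul_of_nonneg_left hw (by positivity)
  have hKcompact : ∀ y, IsCompact (Kset y) := by
    intro y
    rw [Metric.isCompact_iff_isClosed_bounded]
    constructor
    · exact (isClosed_le hψcont.norm continuous_const).inter
        (isClosed_le (hψcont.sub continuous_const).norm continuous_const)
    · exact hSSbdd.subset (hKsub y)
  -- covering
  have hcover : {w : Fin n → ℝ | ‖ψ w‖ ≤ b} ⊆ ⋃ y ∈ s, Kset y := by
    intro w hw
    simp only [mem_setOf_eq] at hw
    have hu1 : ‖((φ w : L) : X)‖ ≤ 1 := by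
      have h1 : b * ‖φ w‖ ≤ b := le_trans (hψlow w) hw
      have h2 : ‖φ w‖ ≤ 1 := by
        by_contra hcon
        push_neg at hcon
        nlinarith
      exact h2
    obtain ⟨y, hy, hyd⟩ := hcov ((φ w : L) : X) hu1
    refine mem_biUnion hy ⟨hw, ?_⟩
    rw [hψ w]
    exact hyd
  -- volume bounds
  have hfinrank : Module.finrank ℝ (Fin n → ℝ) = n := Module.finrank_fin_fun ℝ
  have hsmul_vol : ∀ r : ℝ, 0 < r → volume (r • U) = ENNReal.ofReal (r ^ n) * volume U := by
    intro r hr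
    rw [Measure.addHaar_smul volume r U, hfinrank, abs_of_pos (pow_pos hr n)]
  -- per-ball volume bound
  have hball_vol : ∀ y, volume (Kset y) ≤ ENNReal.ofReal (ε ^ n) * volume U := by
    intro y
    rcases eq_empty_or_nonempty (Kset y) with hKe | hKne
    · rw [hKe]
      simp
    · have hrs := rs_lower n (Kset y) (Kset y) (hKcompact y) (hKcompact y) hKne hKne
      have hsub2 : Kset y - Kset y ⊆ (2 * ε) • U := by
        rw [hUsmul (2 * ε) (by positivity)]
        rintro x ⟨w1, hw1, w2, hw2, rfl⟩
        simp only [mem_setOf_eq]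
        have : ψ (w1 - w2) = (ψ w1 - y) - (ψ w2 - y) := by
          rw [map_sub]
          abel
        rw [this]
        calc ‖(ψ w1 - y) - (ψ w2 - y)‖ ≤ ‖ψ w1 - y‖ + ‖ψ w2 - y‖ := norm_sub_le _ _
          _ ≤ ε + ε := add_le_add hw1.2 hw2.2
          _ = 2 * ε := by ring
      have hDvol : volume (Kset y - Kset y) ≤ ENNReal.ofReal ((2 * ε) ^ n) * volume U := by
        calc volume (Kset y - Kset y) ≤ volume ((2 * ε) • U) := measure_mono hsub2
          _ = ENNReal.ofReal ((2 * ε) ^ n) * volume U := hsmul_vol _ (by positivity)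
      have h4 : ((2:ℝ≥0∞) ^ n) ^ (2:ℕ) = 4 ^ n := by
        rw [← pow_mul, mul_comm, pow_mul]
        norm_num
      have hsq : ((2:ℝ≥0∞) ^ n * volume (Kset y)) ^ (2:ℕ) ≤
          (ENNReal.ofReal ((2 * ε) ^ n) * volume U) ^ (2:ℕ) := by
        calc ((2:ℝ≥0∞) ^ n * volume (Kset y)) ^ (2:ℕ)
            = 4 ^ n * (volume (Kset y) * volume (Kset y)) := by
              rw [mul_pow, h4, pow_two]
          _ ≤ volume (Kset y - Kset y) ^ (2:ℕ) := hrs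
          _ ≤ (ENNReal.ofReal ((2 * ε) ^ n) * volume U) ^ (2:ℕ) :=
              pow_le_pow_left' hDvol 2
      have hlin : (2:ℝ≥0∞) ^ n * volume (Kset y) ≤
          ENNReal.ofReal ((2 * ε) ^ n) * volume U := by
        by_contra hcon
        push_neg at hcon
        exact absurd hsq (not_le.2 (ENNReal.pow_lt_pow_left two_ne_zero hcon))
      have hofr : ENNReal.ofReal ((2 * ε) ^ n) = (2:ℝ≥0∞) ^ n * ENNReal.ofReal (ε ^ n) := by
        rw [mul_pow, ENNReal.ofReal_mul (by positivity), ENNReal.ofReal_pow (by norm_num)]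
        norm_num
      rw [hofr, mul_assoc] at hlin
      exact (ENNReal.mul_le_mul_iff_right (by positivity) (by simp)).1 hlin
  -- assemble
  have hSSvol : ENNReal.ofReal (b ^ n) * volume U = volume {w : Fin n → ℝ | ‖ψ w‖ ≤ b} := by
    rw [← hUsmul b hb0, hsmul_vol b hb0]
  have hchain : ENNReal.ofReal (b ^ n) * volume U ≤
      (2:ℝ≥0∞) ^ (n - 1) * (ENNReal.ofReal (ε ^ n) * volume U) := by
    rw [hSSvol]
    calc volume {w : Fin n → ℝ | ‖ψ w‖ ≤ b} ≤ volume (⋃ y ∈ s, Kset y) :=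
          measure_mono hcover
      _ ≤ ∑ y ∈ s, volume (Kset y) := measure_biUnion_finset_le s Kset
      _ ≤ s.card • (ENNReal.ofReal (ε ^ n) * volume U) :=
          Finset.sum_le_card_nsmul s _ _ (fun y _ => hball_vol y)
      _ = (s.card : ℝ≥0∞) * (ENNReal.ofReal (ε ^ n) * volume U) := nsmul_eq_mul _ _
      _ ≤ (2:ℝ≥0∞) ^ (n - 1) * (ENNReal.ofReal (ε ^ n) * volume U) := by
          apply mul_le_mul_left
          calc (s.card : ℝ≥0∞) ≤ ((2 ^ (n-1) : ℕ) : ℝ≥0∞) := Nat.cast_le.2 hcard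
            _ = (2:ℝ≥0∞) ^ (n - 1) := by push_cast; ring
  have h1 : ENNReal.ofReal (b ^ n) ≤ (2:ℝ≥0∞) ^ (n - 1) * ENNReal.ofReal (ε ^ n) := by
    have h2 := hchain
    rw [← mul_assoc] at h2
    exact (ENNReal.mul_le_mul_iff_left hUvol_pos hUvol_top).1 h2
  have hreal : ENNReal.ofReal (b ^ n) ≤ ENNReal.ofReal ((2 * ε) ^ n) := by
    have h3 : ((2:ℝ≥0∞) ^ (n - 1)) = ENNReal.ofReal (2 ^ (n - 1)) := by
      rw [ENNReal.ofReal_pow (by norm_num : (0:ℝ) ≤ 2)]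
      norm_num
    calc ENNReal.ofReal (b ^ n) ≤ (2:ℝ≥0∞) ^ (n - 1) * ENNReal.ofReal (ε ^ n) := h1
      _ = ENNReal.ofReal (2 ^ (n - 1) * ε ^ n) := by
          rw [h3, ← ENNReal.ofReal_mul (by positivity)]
      _ ≤ ENNReal.ofReal ((2 * ε) ^ n) := by
          apply ENNReal.ofReal_le_ofReal
          rw [mul_pow]
          apply mul_le_mul_of_nonneg_right _ (pow_nonneg hε.le n)
          exact pow_le_pow_right₀ (by norm_num) (Nat.sub_le n 1)
  have hbn : b ^ n ≤ (2 * ε) ^ n :=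
    (ENNReal.ofReal_le_ofReal_iff (by positivity)).1 hreal
  exact (pow_le_pow_iff_left₀ hb0.le (by positivity) (by omega)).1 hbn

end BernsteinEntropyAux

/-- For Banach spaces `X`, `Y`, any `T ∈ L(X,Y)` and any `n ≥ 1`,
`b_n(T) ≤ 2√2 · e_n(T)`. -/
theorem bernstein_le_two_sqrt_two_mul_entropy
    {X Y : Type*} [NormedAddCommGroup X] [NormedSpace ℝ X] [CompleteSpace X]
    [NormedAddCommGroup Y] [NormedSpace ℝ Y] [CompleteSpace Y]
    (T : X →L[ℝ] Y) (n : ℕ) (hn : 1 ≤ n) :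
    bernsteinNumber n T ≤ 2 * Real.sqrt 2 * entropyNumber n T := by
  have hsqrt2 : 1 ≤ Real.sqrt 2 := Real.one_le_sqrt.2 (by norm_num)
  have h2s2 : (0:ℝ) < 2 * Real.sqrt 2 := by positivity
  have hSne : {ε : ℝ | 0 < ε ∧ ∃ s : Finset Y, s.card ≤ 2 ^ (n - 1) ∧
      ∀ x : X, ‖x‖ ≤ 1 → ∃ y ∈ s, ‖T x - y‖ ≤ ε}.Nonempty := by
    refine ⟨‖T‖ + 1, by positivity, {0}, ?_, ?_⟩
    · simpa using Nat.one_le_two_pow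
    · intro x hx
      refine ⟨0, Finset.mem_singleton_self 0, ?_⟩
      rw [sub_zero]
      calc ‖T x‖ ≤ ‖T‖ * ‖x‖ := T.le_opNorm x
        _ ≤ ‖T‖ * 1 := mul_le_mul_of_nonneg_left hx (norm_nonneg T)
        _ ≤ ‖T‖ + 1 := by linarith [norm_nonneg T]
  have hEnn : 0 ≤ entropyNumber n T := by
    rw [entropyNumber]
    exact Real.sInf_nonneg (fun ε hε => hε.1.le)
  rw [bernsteinNumber]
  apply Real.iSup_le _ (by positivity)
  intro L
  set m := ⨅ x : {x : L.1 // x ≠ 0}, ‖T (x.1 : X)‖ / ‖(x.1 : X)‖ with hmdef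
  have hper : ∀ ε : ℝ, (0 < ε ∧ ∃ s : Finset Y, s.card ≤ 2 ^ (n - 1) ∧
      ∀ x : X, ‖x‖ ≤ 1 → ∃ y ∈ s, ‖T x - y‖ ≤ ε) → m ≤ 2 * Real.sqrt 2 * ε := by
    rintro ε ⟨hε, s, hcard, hcov⟩
    have h1 : m ≤ 2 * ε := BernsteinEntropyAux.core T n hn L.1 L.2 hε s hcard hcov
    nlinarith
  have hlb : m / (2 * Real.sqrt 2) ≤ entropyNumber n T := by
    rw [entropyNumber]
    apply le_csInf hSne
    intro ε hε
    rw [div_le_iff₀ h2s2]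
    calc m ≤ 2 * Real.sqrt 2 * ε := hper ε hε
      _ = ε * (2 * Real.sqrt 2) := by ring
  calc m = m / (2 * Real.sqrt 2) * (2 * Real.sqrt 2) := by
        field_simp
    _ ≤ entropyNumber n T * (2 * Real.sqrt 2) :=
        mul_le_mul_of_nonneg_right hlb h2s2.le
    _ = 2 * Real.sqrt 2 * entropyNumber n T := by ring
end
end

section
/- Let X, Y be Banach spaces with dim X = dim Y = m < ∞, and let T : X → Y be an invertible bounded linear operator. Then for every n ∈ ℕ with n ≤ m, one has b_n(T) · c_{m−n+1}(T^{−1}) = 1, where b_n denotes Bernstein numbers and c_k denotes Gelfand numbers. -/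
set_option synthInstance.maxHeartbeats 1000000
set_option maxHeartbeats 1000000

noncomputable section

open Module

/-- The `n`-th Gelfand number: infimum of the norm of the restriction of `T`
to closed subspaces `M` of codimension `< n`. -/
def gelfandNumber {X Y : Type*} [NormedAddCommGroup X] [NormedSpace ℝ X]
    [NormedAddCommGroup Y] [NormedSpace ℝ Y] (n : ℕ) (T : X →L[ℝ] Y) : ℝ :=
  sInf {c : ℝ | ∃ M : Submodule ℝ X, IsClosed (M : Set X) ∧
    FiniteDimensional ℝ (X ⧸ M) ∧ Module.finrank ℝ (X ⧸ M) < n ∧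
    ‖T.comp M.subtypeL‖ = c}

lemma aux_exists_submodule {V : Type*} [AddCommGroup V] [Module ℝ V]
    (k : ℕ) (hk : k ≤ finrank ℝ V) : ∃ L : Submodule ℝ V, finrank ℝ L = k := by
  obtain ⟨f, hf⟩ := exists_linearIndependent_of_le_finrank hk
  exact ⟨Submodule.span ℝ (Set.range f), by rw [finrank_span_eq_card hf, Fintype.card_fin]⟩

lemma aux_restrict_mono {X Y : Type*} [NormedAddCommGroup X] [NormedSpace ℝ X]
    [NormedAddCommGroup Y] [NormedSpace ℝ Y] (S : Y →L[ℝ] X) {M' M : Submodule ℝ Y}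
    (h : M' ≤ M) : ‖S.comp M'.subtypeL‖ ≤ ‖S.comp M.subtypeL‖ := by
  refine (S.comp M'.subtypeL).opNorm_le_bound (norm_nonneg (S.comp M.subtypeL)) fun y => ?_
  have := (S.comp M.subtypeL).le_opNorm ⟨y.1, h y.2⟩
  simpa using this

lemma key_inf {X Y : Type*} [NormedAddCommGroup X] [NormedSpace ℝ X]
    [NormedAddCommGroup Y] [NormedSpace ℝ Y] [FiniteDimensional ℝ X]
    (T : X ≃L[ℝ] Y) {n : ℕ} (hn : 1 ≤ n)
    (L : Submodule ℝ X) (hL : Module.finrank ℝ L = n) :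
    0 < ‖(T.symm : Y →L[ℝ] X).comp (L.map (T.toLinearEquiv : X →ₗ[ℝ] Y)).subtypeL‖ ∧
      (⨅ x : {x : ↥L // x ≠ 0}, ‖(T : X →L[ℝ] Y) (x.1 : X)‖ / ‖(x.1 : X)‖)
        = ‖(T.symm : Y →L[ℝ] X).comp (L.map (T.toLinearEquiv : X →ₗ[ℝ] Y)).subtypeL‖⁻¹ := by
  set M : Submodule ℝ Y := L.map (T.toLinearEquiv : X →ₗ[ℝ] Y) with hM
  set R : ↥M →L[ℝ] X := (T.symm : Y →L[ℝ] X).comp M.subtypeL with hR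
  set bL : ℝ := ⨅ x : {x : ↥L // x ≠ 0}, ‖(T : X →L[ℝ] Y) (x.1 : X)‖ / ‖(x.1 : X)‖ with hbL
  have hpos : 0 < Module.finrank ℝ L := hL ▸ hn
  obtain ⟨x0, hx0⟩ := Module.finrank_pos_iff_exists_ne_zero.mp hpos
  have hmemM : ∀ x : ↥L, T (x : X) ∈ M := fun x => ⟨x, x.2, by simp⟩
  have hRapp : ∀ x : ↥L, R ⟨T (x : X), hmemM x⟩ = (x : X) := fun x => by simp [hR]
  have hkey : ∀ x : ↥L, ‖(x : X)‖ ≤ ‖R‖ * ‖T (x : X)‖ := by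
    intro x
    have h := R.le_opNorm ⟨T (x : X), hmemM x⟩
    rw [hRapp x] at h
    simpa using h
  have hx0norm : (0:ℝ) < ‖(x0 : X)‖ := by
    rw [norm_pos_iff]
    exact fun h => hx0 (by exact_mod_cast Subtype.ext h)
  have hr_pos : 0 < ‖R‖ := by
    nlinarith [hkey x0, norm_nonneg (T (x0 : X)), norm_nonneg R, hx0norm]
  haveI : Nonempty {x : ↥L // x ≠ 0} := ⟨⟨x0, hx0⟩⟩
  have hlb : ∀ x : {x : ↥L // x ≠ 0},
      ‖R‖⁻¹ ≤ ‖(T : X →L[ℝ] Y) (x.1 : X)‖ / ‖(x.1 : X)‖ := by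
    rintro ⟨x, hx⟩
    have hxn : (0:ℝ) < ‖(x : X)‖ := by
      rw [norm_pos_iff]
      exact fun h => hx (by exact_mod_cast Subtype.ext h)
    have h1 := hkey x
    rw [le_div_iff₀ hxn]
    simp only [ContinuousLinearEquiv.coe_coe]
    rw [inv_mul_le_iff₀ hr_pos]
    linarith [h1]
  have hbL_lb : ‖R‖⁻¹ ≤ bL := le_ciInf hlb
  have hbL_pos : 0 < bL := lt_of_lt_of_le (inv_pos.2 hr_pos) hbL_lb
  have hub : ‖R‖ ≤ bL⁻¹ := by
    refine R.opNorm_le_bound (by positivity) fun y => ?_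
    obtain ⟨x, hxL, hxy⟩ := y.2
    by_cases hx : x = 0
    · have hy1 : (y : Y) = 0 := by rw [← hxy, hx]; simp
      have : R y = 0 := by
        rw [hR]
        simp only [ContinuousLinearMap.comp_apply, Submodule.subtypeL_apply, hy1]
        simp
      rw [this]
      simp
      positivity
    · have hxn : (0:ℝ) < ‖x‖ := norm_pos_iff.2 hx
      have hxLne : (⟨x, hxL⟩ : ↥L) ≠ 0 := fun h => hx (by simpa using congrArg Subtype.val h)
      have hinf : bL ≤ ‖(T : X →L[ℝ] Y) x‖ / ‖x‖ := by
        have := ciInf_le (f := fun x : {x : ↥L // x ≠ 0} =>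
            ‖(T : X →L[ℝ] Y) (x.1 : X)‖ / ‖(x.1 : X)‖)
          ⟨0, by rintro r ⟨z, rfl⟩; positivity⟩ ⟨⟨x, hxL⟩, hxLne⟩
        simpa [hbL] using this
      have hy1 : (y : Y) = T x := by rw [← hxy]; simp
      have hRy : ‖R y‖ = ‖x‖ := by
        rw [hR]
        simp only [ContinuousLinearMap.comp_apply, Submodule.subtypeL_apply, hy1]
        simp
      have hyn : ‖y‖ = ‖T x‖ := by rw [← hy1]; rfl
      rw [hRy, hyn]
      rw [le_div_iff₀ hxn] at hinf
      simp only [ContinuousLinearEquiv.coe_coe] at hinf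
      have h2 := mul_le_mul_of_nonneg_left hinf (inv_nonneg.2 hbL_pos.le)
      rw [← mul_assoc, inv_mul_cancel₀ hbL_pos.ne', one_mul] at h2
      linarith
  refine ⟨hr_pos, le_antisymm ?_ hbL_lb⟩
  have := inv_anti₀ hr_pos hub
  rwa [inv_inv] at this

/-- If `dim X = dim Y = m < ∞` and `T : X → Y` is invertible, then for
`1 ≤ n ≤ m` one has `b_n(T) · c_{m-n+1}(T⁻¹) = 1`. -/
theorem bernstein_mul_gelfand_inv
    {X Y : Type*} [NormedAddCommGroup X] [NormedSpace ℝ X] [CompleteSpace X]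
    [NormedAddCommGroup Y] [NormedSpace ℝ Y] [CompleteSpace Y]
    [FiniteDimensional ℝ X] [FiniteDimensional ℝ Y]
    (m : ℕ) (hX : Module.finrank ℝ X = m) (hY : Module.finrank ℝ Y = m)
    (T : X ≃L[ℝ] Y) (n : ℕ) (hn : 1 ≤ n) (hnm : n ≤ m) :
    bernsteinNumber n (T : X →L[ℝ] Y) * gelfandNumber (m - n + 1) (T.symm : Y →L[ℝ] X) = 1 := by
  set S : X →L[ℝ] Y := (T : X →L[ℝ] Y) with hS
  set S' : Y →L[ℝ] X := (T.symm : Y →L[ℝ] X) with hS'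
  set G : Set ℝ := {c : ℝ | ∃ M : Submodule ℝ Y, IsClosed (M : Set Y) ∧
    FiniteDimensional ℝ (Y ⧸ M) ∧ Module.finrank ℝ (Y ⧸ M) < m - n + 1 ∧
    ‖S'.comp M.subtypeL‖ = c} with hGdef
  have hgel : gelfandNumber (m - n + 1) S' = sInf G := rfl
  set F : {L : Submodule ℝ X // Module.finrank ℝ L = n} → ℝ :=
    fun L => ⨅ x : {x : L.1 // x ≠ 0}, ‖S (x.1 : X)‖ / ‖(x.1 : X)‖ with hF
  have hber : bernsteinNumber n S = ⨆ L, F L := rfl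
  -- basic positivity of ‖S‖
  have hm1 : 1 ≤ m := le_trans hn hnm
  obtain ⟨z0, hz0⟩ := Module.finrank_pos_iff_exists_ne_zero.mp
    (show 0 < finrank ℝ X by rw [hX]; omega)
  have hS_pos : 0 < ‖S‖ := by
    have h1 : ‖S z0‖ ≤ ‖S‖ * ‖z0‖ := S.le_opNorm z0
    have h2 : (0:ℝ) < ‖S z0‖ := by
      rw [norm_pos_iff]
      intro h
      apply hz0
      simpa [hS] using congrArg T.symm h
    nlinarith [norm_pos_iff.2 hz0]
  -- membership of images
  have hGmem : ∀ (L : Submodule ℝ X), finrank ℝ L = n →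
      ‖S'.comp (L.map (T.toLinearEquiv : X →ₗ[ℝ] Y)).subtypeL‖ ∈ G := by
    intro L hL
    set M := L.map (T.toLinearEquiv : X →ₗ[ℝ] Y)
    have hMrank : finrank ℝ M = n := by
      rw [LinearEquiv.finrank_map_eq]; exact hL
    have hq := Submodule.finrank_quotient_add_finrank M
    refine ⟨M, Submodule.closed_of_finiteDimensional M, inferInstance, ?_, rfl⟩
    rw [hY] at hq
    omega
  have hGbdd : BddBelow G := ⟨0, by rintro r ⟨M, -, -, -, rfl⟩; positivity⟩
  obtain ⟨L0, hL0⟩ := aux_exists_submodule (V := X) n (by rw [hX]; exact hnm)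
  have hGne : G.Nonempty := ⟨_, hGmem L0 hL0⟩
  haveI : Nonempty {L : Submodule ℝ X // finrank ℝ L = n} := ⟨⟨L0, hL0⟩⟩
  -- uniform lower bound on G
  have hGlb : ∀ r ∈ G, ‖S‖⁻¹ ≤ r := by
    rintro r ⟨M, -, -, hMlt, rfl⟩
    have hq := Submodule.finrank_quotient_add_finrank M
    rw [hY] at hq
    have hMrank : 0 < finrank ℝ M := by omega
    obtain ⟨y0, hy0⟩ := Module.finrank_pos_iff_exists_ne_zero.mp hMrank
    have hy0n : (0:ℝ) < ‖(y0 : Y)‖ := by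
      rw [norm_pos_iff]
      exact fun h => hy0 (by exact_mod_cast Subtype.ext h)
    have h1 : ‖(y0 : Y)‖ ≤ ‖S‖ * ‖(S'.comp M.subtypeL) y0‖ := by
      have : (y0 : Y) = S (S' (y0 : Y)) := by simp [hS, hS']
      calc ‖(y0 : Y)‖ = ‖S (S' (y0 : Y))‖ := by rw [← this]
        _ ≤ ‖S‖ * ‖S' (y0 : Y)‖ := S.le_opNorm _
        _ = ‖S‖ * ‖(S'.comp M.subtypeL) y0‖ := by rfl
    have h2 : ‖(S'.comp M.subtypeL) y0‖ ≤ ‖S'.comp M.subtypeL‖ * ‖y0‖ :=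
      (S'.comp M.subtypeL).le_opNorm y0
    have h3 : ‖(y0 : Y)‖ = ‖y0‖ := rfl
    have h4 : (1:ℝ) ≤ ‖S‖ * ‖S'.comp M.subtypeL‖ := by
      nlinarith [norm_nonneg S]
    have h5 := mul_le_mul_of_nonneg_left h4 (inv_nonneg.2 hS_pos.le)
    rw [mul_one, ← mul_assoc, inv_mul_cancel₀ hS_pos.ne', one_mul] at h5
    exact h5
  have hc_pos : 0 < sInf G := lt_of_lt_of_le (inv_pos.2 hS_pos) (le_csInf hGne hGlb)
  -- bounded above
  have hFbdd : BddAbove (Set.range F) := by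
    refine ⟨‖S‖, ?_⟩
    rintro r ⟨⟨L, hL⟩, rfl⟩
    have hk := key_inf T hn L hL
    have : F ⟨L, hL⟩ = ‖S'.comp (L.map (T.toLinearEquiv : X →ₗ[ℝ] Y)).subtypeL‖⁻¹ := hk.2
    rw [this]
    have := hGlb _ (hGmem L hL)
    calc ‖S'.comp (L.map (T.toLinearEquiv : X →ₗ[ℝ] Y)).subtypeL‖⁻¹
        ≤ (‖S‖⁻¹)⁻¹ := inv_anti₀ (inv_pos.2 hS_pos) this
      _ = ‖S‖ := inv_inv _
  -- b ≤ c⁻¹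
  have hb_le : (⨆ L, F L) ≤ (sInf G)⁻¹ := by
    refine ciSup_le fun ⟨L, hL⟩ => ?_
    have hk := key_inf T hn L hL
    have h1 : F ⟨L, hL⟩ = ‖S'.comp (L.map (T.toLinearEquiv : X →ₗ[ℝ] Y)).subtypeL‖⁻¹ := hk.2
    rw [h1]
    exact inv_anti₀ hc_pos (csInf_le hGbdd (hGmem L hL))
  -- b > 0
  have hb_pos : 0 < ⨆ L, F L := by
    have hk := key_inf T hn L0 hL0
    have h1 : F ⟨L0, hL0⟩ = ‖S'.comp (L0.map (T.toLinearEquiv : X →ₗ[ℝ] Y)).subtypeL‖⁻¹ := hk.2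
    have h2 : 0 < F ⟨L0, hL0⟩ := by rw [h1]; exact inv_pos.2 hk.1
    exact lt_of_lt_of_le h2 (le_ciSup hFbdd ⟨L0, hL0⟩)
  -- b⁻¹ ≤ c
  have hc_ge : (⨆ L, F L)⁻¹ ≤ sInf G := by
    refine le_csInf hGne ?_
    rintro r ⟨M, -, -, hMlt, rfl⟩
    have hq := Submodule.finrank_quotient_add_finrank M
    rw [hY] at hq
    have hMrank : n ≤ finrank ℝ M := by omega
    obtain ⟨q, hqr⟩ := aux_exists_submodule (V := ↥M) n hMrank
    set M' : Submodule ℝ Y := q.map M.subtype with hM'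
    have hM'le : M' ≤ M := Submodule.map_subtype_le M q
    have hM'rank : finrank ℝ M' = n := by
      rw [← ((Submodule.equivMapOfInjective M.subtype M.injective_subtype q).finrank_eq)]
      exact hqr
    set L : Submodule ℝ X := M'.map (T.symm.toLinearEquiv : Y →ₗ[ℝ] X) with hLdef
    have hLrank : finrank ℝ L = n := by
      rw [hLdef, LinearEquiv.finrank_map_eq]; exact hM'rank
    have hLM' : L.map (T.toLinearEquiv : X →ₗ[ℝ] Y) = M' := by
      ext y
      simp only [Submodule.mem_map, hLdef]
      constructor
      · rintro ⟨x, ⟨y', hy', rfl⟩, rfl⟩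
        simpa using hy'
      · intro hy
        exact ⟨T.symm y, ⟨y, hy, rfl⟩, by simp⟩
    have hk := key_inf T hn L hLrank
    rw [hLM'] at hk
    have hble : ‖S'.comp M'.subtypeL‖⁻¹ ≤ ⨆ L, F L := by
      have h1 : F ⟨L, hLrank⟩ = ‖S'.comp M'.subtypeL‖⁻¹ := hk.2
      rw [← h1]
      exact le_ciSup hFbdd ⟨L, hLrank⟩
    have h2 : (⨆ L, F L)⁻¹ ≤ (‖S'.comp M'.subtypeL‖⁻¹)⁻¹ :=
      inv_anti₀ (inv_pos.2 hk.1) hble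
    rw [inv_inv] at h2
    exact le_trans h2 (aux_restrict_mono S' hM'le)
  -- conclude
  rw [hber, hgel]
  have hcb1 : (⨆ L, F L) * sInf G ≤ 1 := by
    calc (⨆ L, F L) * sInf G ≤ (sInf G)⁻¹ * sInf G :=
          mul_le_mul_of_nonneg_right hb_le hc_pos.le
      _ = 1 := inv_mul_cancel₀ hc_pos.ne'
  have hcb2 : 1 ≤ (⨆ L, F L) * sInf G := by
    calc (1:ℝ) = (⨆ L, F L) * (⨆ L, F L)⁻¹ := (mul_inv_cancel₀ hb_pos.ne').symm
      _ ≤ (⨆ L, F L) * sInf G := mul_le_mul_of_nonneg_left hc_ge hb_pos.le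
  linarith
end
end

section
/- The absolutely 2-summing norm of the identity map from ℓ_p^m to ℓ_2^m with 2 ≤ p ≤ ∞ satisfies π_2(id : ℓ_p^m → ℓ_2^m) = m^{1/2}. -/
noncomputable section

open scoped ENNReal

/-- The identity map `ℓ_p^m → ℓ_q^m` as a continuous linear map. -/
def idLp (m : ℕ) (p q : ℝ≥0∞) [Fact (1 ≤ p)] [Fact (1 ≤ q)] :
    PiLp p (fun _ : Fin m => ℝ) →L[ℝ] PiLp q (fun _ : Fin m => ℝ) :=
  LinearMap.toContinuousLinearMap
    ((WithLp.linearEquiv q ℝ (Fin m → ℝ)).symm.toLinearMap ∘ₗ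
      (WithLp.linearEquiv p ℝ (Fin m → ℝ)).toLinearMap)

/-- `T` is absolutely `(r,s)`-summing with constant `C`. -/
def IsAbsSumming {X Y : Type*} [NormedAddCommGroup X] [NormedSpace ℝ X]
    [NormedAddCommGroup Y] [NormedSpace ℝ Y]
    (r s : ℝ) (T : X →L[ℝ] Y) (C : ℝ) : Prop :=
  ∀ (k : ℕ) (x : Fin k → X),
    (∑ j, ‖T (x j)‖ ^ r) ^ (1 / r) ≤
      C * ⨆ f : {f : X →L[ℝ] ℝ // ‖f‖ ≤ 1}, (∑ j, |f.1 (x j)| ^ s) ^ (1 / s)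

/-- The absolutely `(r,s)`-summing norm `π_{r,s}(T)`. -/
def summingNorm {X Y : Type*} [NormedAddCommGroup X] [NormedSpace ℝ X]
    [NormedAddCommGroup Y] [NormedSpace ℝ Y] (r s : ℝ) (T : X →L[ℝ] Y) : ℝ :=
  sInf {C : ℝ | 0 ≤ C ∧ IsAbsSumming r s T C}

section Aux
variable {m : ℕ}

instance instNonemptyUnitBallDual {X : Type*} [NormedAddCommGroup X] [NormedSpace ℝ X] :
    Nonempty {f : X →L[ℝ] ℝ // ‖f‖ ≤ 1} :=
  ⟨⟨0, by simp⟩⟩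

lemma abs_rpow_two (a : ℝ) : |a| ^ (2:ℝ) = a ^ 2 := by
  rw [show (2:ℝ) = ((2:ℕ):ℝ) by norm_cast, Real.rpow_natCast, sq_abs]

lemma nonneg_rpow_two (a : ℝ) : a ^ (2:ℝ) = a ^ 2 := by
  rw [show (2:ℝ) = ((2:ℕ):ℝ) by norm_cast, Real.rpow_natCast]

lemma equiv_symm_sum_smul (p : ℝ≥0∞) [Fact (1 ≤ p)] (c : Fin m → ℝ) :
    (WithLp.equiv p (Fin m → ℝ)).symm c =
      ∑ i, c i • (WithLp.equiv p (Fin m → ℝ)).symm (Pi.single i 1) := by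
  have h := Finset.univ_sum_single c
  calc (WithLp.equiv p (Fin m → ℝ)).symm c
      = (WithLp.linearEquiv p ℝ (Fin m → ℝ)).symm (∑ i, Pi.single i (c i)) := by
        rw [h]; rfl
    _ = ∑ i, c i • (WithLp.equiv p (Fin m → ℝ)).symm (Pi.single i 1) := by
        rw [map_sum]
        refine Finset.sum_congr rfl fun i _ => ?_
        rw [show (Pi.single i (c i) : Fin m → ℝ) = c i • (Pi.single i 1 : Fin m → ℝ) by
          rw [← Pi.single_smul, smul_eq_mul, mul_one], map_smul]
        rfl

lemma coord_abs_le_norm (p : ℝ≥0∞) [Fact (1 ≤ p)]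
    (x : PiLp p (fun _ : Fin m => ℝ)) (i : Fin m) : |x i| ≤ ‖x‖ := by
  rcases eq_or_ne p ∞ with rfl | hptop
  · rw [PiLp.norm_eq_ciSup]
    exact le_ciSup (f := fun j => ‖x j‖) (Set.Finite.bddAbove (Set.finite_range _)) i
  · have hq : 0 < p.toReal := ENNReal.toReal_pos
      (by have h := Fact.out (p := 1 ≤ p); intro h0; rw [h0] at h; simp at h) hptop
    rw [PiLp.norm_eq_sum hq]
    have h1 : |x i| = (|x i| ^ p.toReal) ^ (1 / p.toReal) := by
      rw [← Real.rpow_mul (abs_nonneg _), mul_one_div, div_self hq.ne', Real.rpow_one]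
    rw [h1]
    apply Real.rpow_le_rpow (Real.rpow_nonneg (abs_nonneg _) _) _ (by positivity)
    exact Finset.single_le_sum (f := fun j => ‖x j‖ ^ p.toReal)
      (fun j _ => Real.rpow_nonneg (norm_nonneg _) _) (Finset.mem_univ i)

lemma norm_le_sqrt_sum_sq (p : ℝ≥0∞) [Fact (1 ≤ p)] (hp : 2 ≤ p) (c : Fin m → ℝ) :
    ‖(WithLp.equiv p (Fin m → ℝ)).symm c‖ ≤ Real.sqrt (∑ i, c i ^ 2) := by
  set S := Real.sqrt (∑ i, c i ^ 2) with hS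
  have hsum : (0:ℝ) ≤ ∑ i, c i ^ 2 := Finset.sum_nonneg fun i _ => sq_nonneg _
  have hS0 : 0 ≤ S := Real.sqrt_nonneg _
  have hci : ∀ i, |c i| ≤ S :=
    fun i => Real.abs_le_sqrt (Finset.single_le_sum
      (f := fun j => c j ^ 2) (fun j _ => sq_nonneg _) (Finset.mem_univ i))
  have happ : ∀ i, ((WithLp.equiv p (Fin m → ℝ)).symm c) i = c i := fun i => rfl
  rcases eq_or_ne p ∞ with rfl | hptop
  · rw [PiLp.norm_eq_ciSup]
    refine Real.iSup_le (fun i => ?_) hS0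
    rw [happ i]
    exact (Real.norm_eq_abs _ ▸ hci i)
  · have hq2 : (2:ℝ) ≤ p.toReal := by
      have := (ENNReal.toReal_le_toReal (by norm_num) hptop).mpr hp
      simpa using this
    have hq : 0 < p.toReal := lt_of_lt_of_le (by norm_num) hq2
    rcases eq_or_lt_of_le hsum with hzero | hpos
    · have : c = 0 := by
        funext i
        have := hci i
        rw [hS, ← hzero, Real.sqrt_zero] at this
        exact abs_eq_zero.mp (le_antisymm this (abs_nonneg _))
      simp [this, hS0, ← hS]
    · have hSpos : 0 < S := Real.sqrt_pos.mpr hpos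
      rw [PiLp.norm_eq_sum hq]
      have key : (∑ i, ‖((WithLp.equiv p (Fin m → ℝ)).symm c) i‖ ^ p.toReal)
          ≤ S ^ p.toReal := by
        have step : ∀ i, ‖((WithLp.equiv p (Fin m → ℝ)).symm c) i‖ ^ p.toReal
            ≤ c i ^ 2 * S ^ (p.toReal - 2) := by
          intro i
          rw [happ i, Real.norm_eq_abs]
          have hsplit : |c i| ^ p.toReal = |c i| ^ (2:ℝ) * |c i| ^ (p.toReal - 2) := by
            rw [← Real.rpow_add' (abs_nonneg _) (by rw [add_sub_cancel]; exact hq.ne')]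
            ring_nf
          rw [hsplit, abs_rpow_two]
          exact mul_le_mul_of_nonneg_left
            (Real.rpow_le_rpow (abs_nonneg _) (hci i) (by linarith)) (sq_nonneg _)
        calc (∑ i, ‖((WithLp.equiv p (Fin m → ℝ)).symm c) i‖ ^ p.toReal)
            ≤ ∑ i, c i ^ 2 * S ^ (p.toReal - 2) := Finset.sum_le_sum fun i _ => step i
          _ = (∑ i, c i ^ 2) * S ^ (p.toReal - 2) := by rw [← Finset.sum_mul]
          _ = S ^ (2:ℝ) * S ^ (p.toReal - 2) := by
              rw [nonneg_rpow_two S, Real.sq_sqrt hsum]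
          _ = S ^ p.toReal := by
              rw [← Real.rpow_add hSpos]; ring_nf
      calc (∑ i, ‖((WithLp.equiv p (Fin m → ℝ)).symm c) i‖ ^ p.toReal) ^ (1/p.toReal)
          ≤ (S ^ p.toReal) ^ (1/p.toReal) :=
            Real.rpow_le_rpow (Finset.sum_nonneg fun i _ =>
              Real.rpow_nonneg (norm_nonneg _) _) key (by positivity)
        _ = S := by
            rw [← Real.rpow_mul hS0, mul_one_div, div_self hq.ne', Real.rpow_one]

lemma idLp_apply_coord (m : ℕ) (p q : ℝ≥0∞) [Fact (1 ≤ p)] [Fact (1 ≤ q)]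
    (x : PiLp p (fun _ : Fin m => ℝ)) (i : Fin m) :
    (idLp m p q x) i = x i := rfl

lemma idLp_single (m : ℕ) (p q : ℝ≥0∞) [Fact (1 ≤ p)] [Fact (1 ≤ q)] (c : Fin m → ℝ) :
    idLp m p q ((WithLp.equiv p (Fin m → ℝ)).symm c) =
      (WithLp.equiv q (Fin m → ℝ)).symm c := rfl

lemma upper_bound (m : ℕ) (p : ℝ≥0∞) [Fact (1 ≤ p)] (hp : 2 ≤ p) :
    IsAbsSumming 2 2 (idLp m p 2) (Real.sqrt m) := by
  intro k x
  set g : {f : PiLp p (fun _ : Fin m => ℝ) →L[ℝ] ℝ // ‖f‖ ≤ 1} → ℝ :=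
    fun f => (∑ j, |f.1 (x j)| ^ (2:ℝ)) ^ ((1:ℝ)/2) with hg
  have hg0 : ∀ f, 0 ≤ g f := fun f =>
    Real.rpow_nonneg (Finset.sum_nonneg fun j _ => Real.rpow_nonneg (abs_nonneg _) _) _
  have hbdd : BddAbove (Set.range g) := by
    refine ⟨(∑ j, ‖x j‖ ^ (2:ℝ)) ^ ((1:ℝ)/2), ?_⟩
    rintro _ ⟨f, rfl⟩
    refine Real.rpow_le_rpow (Finset.sum_nonneg fun j _ =>
      Real.rpow_nonneg (abs_nonneg _) _) (Finset.sum_le_sum fun j _ => ?_) (by norm_num)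
    refine Real.rpow_le_rpow (abs_nonneg _) ?_ (by norm_num)
    calc |f.1 (x j)| = ‖f.1 (x j)‖ := (Real.norm_eq_abs _).symm
      _ ≤ ‖f.1‖ * ‖x j‖ := f.1.le_opNorm _
      _ ≤ ‖x j‖ := mul_le_of_le_one_left (norm_nonneg _) f.2
  set S := ⨆ f, g f with hSdef
  have hS0 : 0 ≤ S := le_trans (hg0 _) (le_ciSup hbdd (Classical.arbitrary _))
  have key : ∀ i : Fin m, (∑ j, (x j) i ^ 2) ≤ S ^ 2 := by
    intro i
    have hFi : ‖(PiLp.proj p (fun _ : Fin m => ℝ) i : _ →L[ℝ] ℝ)‖ ≤ 1 := by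
      refine ContinuousLinearMap.opNorm_le_bound _ zero_le_one fun y => ?_
      rw [one_mul, Real.norm_eq_abs]
      exact coord_abs_le_norm p y i
    have hle : g ⟨PiLp.proj p (fun _ : Fin m => ℝ) i, hFi⟩ ≤ S := le_ciSup hbdd _
    have hval : g ⟨PiLp.proj p (fun _ : Fin m => ℝ) i, hFi⟩
        = Real.sqrt (∑ j, (x j) i ^ 2) := by
      rw [hg]
      simp only [PiLp.proj_apply, abs_rpow_two]
      rw [Real.sqrt_eq_rpow]
    rw [hval] at hle
    have := (Real.sqrt_le_left hS0).mp hle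
    exact this
  have hsum : (∑ j, ‖(idLp m p 2) (x j)‖ ^ (2:ℝ)) ≤ (m : ℝ) * S ^ 2 := by
    calc (∑ j, ‖(idLp m p 2) (x j)‖ ^ (2:ℝ))
        = ∑ j, ∑ i, (x j) i ^ 2 := by
          refine Finset.sum_congr rfl fun j _ => ?_
          rw [nonneg_rpow_two, PiLp.norm_eq_of_L2,
            Real.sq_sqrt (Finset.sum_nonneg fun i _ => sq_nonneg _)]
          exact Finset.sum_congr rfl fun i _ => by
            rw [Real.norm_eq_abs, sq_abs, idLp_apply_coord]
      _ = ∑ i, ∑ j, (x j) i ^ 2 := Finset.sum_comm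
      _ ≤ ∑ _i : Fin m, S ^ 2 := Finset.sum_le_sum fun i _ => key i
      _ = (m : ℝ) * S ^ 2 := by simp [mul_comm]
  calc (∑ j, ‖(idLp m p 2) (x j)‖ ^ (2:ℝ)) ^ ((1:ℝ)/2)
      = Real.sqrt (∑ j, ‖(idLp m p 2) (x j)‖ ^ (2:ℝ)) := (Real.sqrt_eq_rpow _).symm
    _ ≤ Real.sqrt ((m : ℝ) * S ^ 2) := Real.sqrt_le_sqrt hsum
    _ = Real.sqrt m * S := by
        rw [Real.sqrt_mul (Nat.cast_nonneg m), Real.sqrt_sq hS0]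
    _ = Real.sqrt m * ⨆ f, g f := rfl

lemma lower_bound (m : ℕ) (p : ℝ≥0∞) [Fact (1 ≤ p)] (hp : 2 ≤ p) {C : ℝ}
    (hC0 : 0 ≤ C) (hC : IsAbsSumming 2 2 (idLp m p 2) C) : Real.sqrt m ≤ C := by
  have h := hC m (fun j => (WithLp.equiv p (Fin m → ℝ)).symm (Pi.single j 1))
  have hLHS : (∑ j : Fin m, ‖(idLp m p 2)
      ((WithLp.equiv p (Fin m → ℝ)).symm (Pi.single j 1))‖ ^ (2:ℝ)) ^ ((1:ℝ)/2)
      = Real.sqrt m := by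
    have : ∀ j : Fin m, ‖(idLp m p 2)
        ((WithLp.equiv p (Fin m → ℝ)).symm (Pi.single j 1))‖ = 1 := by
      intro j
      rw [idLp_single, WithLp.equiv_symm_apply, PiLp.norm_toLp_single]
      simp
    simp only [this, Real.one_rpow, Finset.sum_const, Finset.card_univ, Fintype.card_fin,
      nsmul_eq_mul, mul_one]
    rw [← Real.sqrt_eq_rpow]
  rw [hLHS] at h
  refine le_trans h ?_
  have hsup : (⨆ f : {f : PiLp p (fun _ : Fin m => ℝ) →L[ℝ] ℝ // ‖f‖ ≤ 1},
      (∑ j : Fin m, |f.1 ((WithLp.equiv p (Fin m → ℝ)).symm (Pi.single j 1))| ^ (2:ℝ))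
        ^ ((1:ℝ)/2)) ≤ 1 := by
    refine ciSup_le fun f => ?_
    set c : Fin m → ℝ := fun j => f.1 ((WithLp.equiv p (Fin m → ℝ)).symm (Pi.single j 1))
      with hc
    have hrw : (∑ j : Fin m, |f.1 ((WithLp.equiv p (Fin m → ℝ)).symm (Pi.single j 1))|
        ^ (2:ℝ)) = ∑ j, c j ^ 2 := by
      refine Finset.sum_congr rfl fun j _ => ?_
      rw [abs_rpow_two]
    rw [hrw, ← Real.sqrt_eq_rpow, Real.sqrt_le_one]
    -- show t := ∑ c j ^ 2 ≤ 1
    set t := ∑ j, c j ^ 2 with ht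
    have ht0 : 0 ≤ t := Finset.sum_nonneg fun j _ => sq_nonneg _
    have hfy : f.1 ((WithLp.equiv p (Fin m → ℝ)).symm c) = t := by
      rw [equiv_symm_sum_smul p c, map_sum]
      refine Finset.sum_congr rfl fun j _ => ?_
      rw [map_smul, smul_eq_mul, sq]
    have hle : t ≤ Real.sqrt t := by
      calc t = |f.1 ((WithLp.equiv p (Fin m → ℝ)).symm c)| := by rw [hfy, abs_of_nonneg ht0]
        _ = ‖f.1 ((WithLp.equiv p (Fin m → ℝ)).symm c)‖ := (Real.norm_eq_abs _).symm
        _ ≤ ‖f.1‖ * ‖(WithLp.equiv p (Fin m → ℝ)).symm c‖ := f.1.le_opNorm _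
        _ ≤ ‖(WithLp.equiv p (Fin m → ℝ)).symm c‖ :=
            mul_le_of_le_one_left (norm_nonneg _) f.2
        _ ≤ Real.sqrt (∑ j, c j ^ 2) := norm_le_sqrt_sum_sq p hp c
        _ = Real.sqrt t := rfl
    nlinarith [Real.sq_sqrt ht0, Real.sqrt_nonneg t]
  calc C * _ ≤ C * 1 := mul_le_mul_of_nonneg_left hsup hC0
    _ = C := mul_one C

end Aux

/-- For `2 ≤ p ≤ ∞`, the absolutely 2-summing norm of the identity
`id : ℓ_p^m → ℓ_2^m` equals `m^{1/2}`. -/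
theorem summingNorm_id_lp (m : ℕ) (p : ℝ≥0∞) [Fact (1 ≤ p)] (hp : 2 ≤ p) :
    summingNorm 2 2 (idLp m p 2) = Real.sqrt m := by
  unfold summingNorm
  apply le_antisymm
  · exact csInf_le ⟨0, fun c hc => hc.1⟩ ⟨Real.sqrt_nonneg _, upper_bound m p hp⟩
  · exact le_csInf ⟨Real.sqrt m, Real.sqrt_nonneg _, upper_bound m p hp⟩
      fun C hC => lower_bound m p hp hC.1 hC.2
end
end
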